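/- arXiv:2006.03188 — 2 statements merged into one kernel-verified Lean document; each statement's English description precedes it below -/
import Mathlib

section
/- The graph G (root r joined to path w_0,...,w_48 with v_i adjacent to w_{i-1} and w_i) is uniquely 3-colorable: up to permutation of colors, there is exactly one proper 3-coloring, and in it all vertices v_1,...,v_48 receive the same color as r. -/
/-- Vertices of the graph `G`: the root `r` (left), the path vertices `w₀, …, w₄₈`
(middle, indexed by `Fin 49`), and the vertices `v₁, …, v₄₈` (right, indexed by `Fin 48`,
where index `j` stands for `v_{j+1}`). -/
abbrev V98 : Type := Unit ⊕ Fin 49 ⊕ Fin 48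

/-- One-directional edge relation for `G`:  `r ~ wᵢ` for all `i`;  `wᵢ ~ w_{i+1}`;  and
`v_{j+1} ~ w_j`, `v_{j+1} ~ w_{j+1}`. -/
def Rel98 : V98 → V98 → Prop
  | Sum.inl _, Sum.inr (Sum.inl _) => True
  | Sum.inr (Sum.inl i), Sum.inr (Sum.inl j) => (j : ℕ) = (i : ℕ) + 1
  | Sum.inr (Sum.inr j), Sum.inr (Sum.inl i) => (i : ℕ) = (j : ℕ) ∨ (i : ℕ) = (j : ℕ) + 1
  | _, _ => False

/-- The outerplanar 2-tree `G` on `98` vertices from the paper:  the root `r` is adjacent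
to every `wᵢ`, the `wᵢ` form a path, and each `v_{j+1}` is adjacent to `w_j` and `w_{j+1}`. -/
def G98 : SimpleGraph V98 where
  Adj u v := Rel98 u v ∨ Rel98 v u
  symm := by constructor; intro u v h; exact h.symm
  loopless := by
    constructor
    rintro (u | i | j) h <;> rcases h with h | h <;> simp only [Rel98] at h <;> omega

lemma fin3_eq : ∀ a b x y : Fin 3, a ≠ b → x ≠ a → x ≠ b → y ≠ a → y ≠ b → x = y := by
  decide

lemma fin3_perm : ∀ a b a' b' : Fin 3, a ≠ b → a' ≠ b' →
    ∃ σ : Equiv.Perm (Fin 3), σ a = a' ∧ σ b = b' := by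
  decide

/-- The graph `G` is uniquely `3`-colorable: in every proper
`3`-coloring all the vertices `v₁, …, v₄₈` receive the same color as the root `r`, and
any two proper `3`-colorings differ only by a permutation of the colors. -/
theorem G98_uniquely_three_colorable :
    (∀ c : G98.Coloring (Fin 3), ∀ j : Fin 48, c (Sum.inr (Sum.inr j)) = c (Sum.inl ())) ∧
      ∀ c c' : G98.Coloring (Fin 3), ∃ σ : Equiv.Perm (Fin 3),
        ∀ v : V98, c' v = σ (c v) := by
  -- basic adjacency facts
  have hrw : ∀ (c : G98.Coloring (Fin 3)) (i : Fin 49),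
      c (Sum.inr (Sum.inl i)) ≠ c (Sum.inl ()) := by
    intro c i
    have hadj : G98.Adj (Sum.inl ()) (Sum.inr (Sum.inl i)) := Or.inl trivial
    exact (c.valid hadj).symm
  have hww : ∀ (c : G98.Coloring (Fin 3)) (i j : Fin 49), (j : ℕ) = (i : ℕ) + 1 →
      c (Sum.inr (Sum.inl i)) ≠ c (Sum.inr (Sum.inl j)) := by
    intro c i j h
    exact c.valid (Or.inl h)
  have hvw : ∀ (c : G98.Coloring (Fin 3)) (j : Fin 48) (i : Fin 49),
      ((i : ℕ) = (j : ℕ) ∨ (i : ℕ) = (j : ℕ) + 1) →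
      c (Sum.inr (Sum.inr j)) ≠ c (Sum.inr (Sum.inl i)) := by
    intro c j i h
    exact c.valid (Or.inl h)
  have part1 : ∀ c : G98.Coloring (Fin 3), ∀ j : Fin 48,
      c (Sum.inr (Sum.inr j)) = c (Sum.inl ()) := by
    intro c j
    set i₀ : Fin 49 := ⟨j, by omega⟩
    set i₁ : Fin 49 := ⟨(j : ℕ) + 1, by omega⟩
    have h01 : c (Sum.inr (Sum.inl i₀)) ≠ c (Sum.inr (Sum.inl i₁)) := hww c i₀ i₁ rfl
    exact fin3_eq (c (Sum.inr (Sum.inl i₀))) (c (Sum.inr (Sum.inl i₁)))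
      (c (Sum.inr (Sum.inr j))) (c (Sum.inl ())) h01
      (hvw c j i₀ (Or.inl rfl)) (hvw c j i₁ (Or.inr rfl))
      (hrw c i₀).symm (hrw c i₁).symm
  refine ⟨part1, ?_⟩
  intro c c'
  obtain ⟨σ, hσr, hσw0⟩ := fin3_perm (c (Sum.inl ())) (c (Sum.inr (Sum.inl 0)))
    (c' (Sum.inl ())) (c' (Sum.inr (Sum.inl 0)))
    (hrw c 0).symm (hrw c' 0).symm
  have hw : ∀ n (h : n < 49), c' (Sum.inr (Sum.inl ⟨n, h⟩)) = σ (c (Sum.inr (Sum.inl ⟨n, h⟩))) := by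
    intro n
    induction n with
    | zero => intro h; exact hσw0.symm
    | succ m ih =>
      intro h
      have hm : m < 49 := by omega
      have IH := ih hm
      have hab : σ (c (Sum.inl ())) ≠ σ (c (Sum.inr (Sum.inl ⟨m, hm⟩))) :=
        fun he => (hrw c ⟨m, hm⟩) (σ.injective he).symm
      refine fin3_eq (σ (c (Sum.inl ()))) (σ (c (Sum.inr (Sum.inl ⟨m, hm⟩))))
        _ _ hab ?_ ?_ ?_ ?_
      · rw [hσr]; exact hrw c' ⟨m + 1, h⟩
      · rw [← IH]; exact (hww c' ⟨m, hm⟩ ⟨m + 1, h⟩ rfl).symm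
      · intro he; exact (hrw c ⟨m + 1, h⟩) (σ.injective he)
      · intro he; exact (hww c ⟨m, hm⟩ ⟨m + 1, h⟩ rfl) (σ.injective he).symm
  refine ⟨σ, ?_⟩
  rintro (⟨⟩ | i | j)
  · exact hσr.symm
  · have := hw i i.isLt; simpa using this
  · rw [part1 c' j, part1 c j, hσr]
end

section
/- In the marking game (connected or not) on a connected graph G of treedepth k ≥ 3 witnessed by rooted tree T with root r ∈ V(G), if Alice follows the ancestor-marking strategy (first mark r; whenever Bob marks v, mark the least-level unmarked available ancestor of v, else any least-level available vertex), then at every point of the game and for every unmarked vertex v, the number of descendant-neighbors of v marked by Bob is at most the number of marked ancestors of v. -/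
/-- A rooted tree on vertex set `V`, given by a parent function together with a
depth function certifying acyclicity.  The root is the unique vertex of depth `0`. -/
structure RTree (V : Type*) where
  parent : V → V
  root : V
  depth : V → ℕ
  depth_root : depth root = 0
  depth_parent : ∀ v, v ≠ root → depth (parent v) + 1 = depth v
  parent_root : parent root = root

namespace RTree

variable {V : Type*} (T : RTree V)

/-- `u` is a strict ancestor of `v` in `T`. -/
def IsStrictAncestor (u v : V) : Prop :=
  u ≠ v ∧ ∃ n : ℕ, T.parent^[n] v = u

/-- The closure of a rooted tree: `u ~ v` iff one is a strict ancestor of the other. -/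
def closure : SimpleGraph V where
  Adj u v := T.IsStrictAncestor u v ∨ T.IsStrictAncestor v u
  symm := ⟨by intro u v h; tauto⟩
  loopless := ⟨by rintro v (⟨h, -⟩ | ⟨h, -⟩) <;> exact h rfl⟩

/-- `T` has height at most `k`: every root-to-leaf path has at most `k` vertices. -/
def HeightLE (k : ℕ) : Prop := ∀ v, T.depth v < k

/-- `v` is a leaf of `T` (it has no children). -/
def IsLeaf (v : V) : Prop := ∀ u, T.parent u = v → u = v

end RTree

/-- A graph `G` has treedepth at most `k` if it embeds into the closure of a rooted
tree of height at most `k` (whose vertex set may be larger than that of `G`). -/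
def TreedepthLE {W : Type} (G : SimpleGraph W) (k : ℕ) : Prop :=
  ∃ (V : Type) (T : RTree V) (f : W ↪ V),
    T.HeightLE k ∧ ∀ a b, G.Adj a b → T.closure.Adj (f a) (f b)

section Strategy

variable {V : Type} (G : SimpleGraph V) (T : RTree V)

/-- A vertex is available at a state `L` if it is unmarked and adjacent to a marked
vertex. -/
def Available (L : List V) (u : V) : Prop := u ∉ L ∧ ∃ w ∈ L, G.Adj w u

/-- Alice's ancestor-marking strategy: in the state `L` in which Bob has just marked `b`,
Alice may answer with `a` iff either `a` is an unmarked available ancestor of `b` of least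
level, or no unmarked available ancestor of `b` exists and `a` is an available vertex of
least level. -/
def AliceMoveOK (L : List V) (b a : V) : Prop :=
  (T.IsStrictAncestor a b ∧ Available G L a ∧
    ∀ u, T.IsStrictAncestor u b → Available G L u → T.depth a ≤ T.depth u) ∨
  ((∀ u, T.IsStrictAncestor u b → ¬ Available G L u) ∧ Available G L a ∧
    ∀ u, Available G L u → T.depth a ≤ T.depth u)

/-- The chronological list `L` of marked vertices (earliest first) is a play of the
marking game in which no vertex is marked twice, Alice (who moves at even positions,
starting the game) first marks the root, and afterwards always follows the
ancestor-marking strategy.  Bob (who moves at odd positions) may mark any unmarked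
vertex. -/
def FollowsStrategy (L : List V) : Prop :=
  L.Nodup ∧
  (∀ h : 0 < L.length, L.get ⟨0, h⟩ = T.root) ∧
  ∀ i : ℕ, 1 ≤ i → ∀ h : 2 * i < L.length,
    AliceMoveOK G T (L.take (2 * i)) (L.get ⟨2 * i - 1, by omega⟩) (L.get ⟨2 * i, h⟩)

open Classical in
/-- The number of marked strict ancestors of `v` at the state `L`. -/
noncomputable def markedAncestors (L : List V) (v : V) : ℕ :=
  L.countP fun u => decide (T.IsStrictAncestor u v)

open Classical in
/-- The number of descendant-neighbours of `v` that were marked by Bob at the state `L`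
(Bob's moves are the ones at odd chronological positions). -/
noncomputable def bobDescCount (L : List V) (v : V) : ℕ :=
  (((L.zipIdx.map Prod.swap).filter fun p => decide (p.1 % 2 = 1)).map Prod.snd).countP
    fun u => decide (G.Adj v u ∧ T.IsStrictAncestor v u)

end Strategy

section Aux

namespace RTree

variable {V : Type} (T : RTree V)

lemma eq_root_of_depth_eq_zero {v : V} (h : T.depth v = 0) : v = T.root := by
  by_contra hv
  have := T.depth_parent v hv
  omega

lemma depth_parent_le (v : V) : T.depth (T.parent v) ≤ T.depth v := by
  by_cases hv : v = T.root
  · subst hv; rw [T.parent_root]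
  · have := T.depth_parent v hv; omega

lemma depth_iterate_le (n : ℕ) (v : V) : T.depth (T.parent^[n] v) ≤ T.depth v := by
  induction n with
  | zero => simp
  | succ n ih =>
      rw [Function.iterate_succ_apply']
      exact le_trans (T.depth_parent_le _) ih

lemma iterate_depth_eq_root : ∀ (n : ℕ) (v : V), T.depth v = n → T.parent^[n] v = T.root := by
  intro n
  induction n with
  | zero => intro v hv; simpa using T.eq_root_of_depth_eq_zero hv
  | succ n ih =>
      intro v hv
      have hv' : v ≠ T.root := by
        intro h; rw [h, T.depth_root] at hv; omega
      have hp := T.depth_parent v hv'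
      rw [Function.iterate_succ_apply]
      exact ih _ (by omega)

lemma root_isStrictAncestor {v : V} (h : v ≠ T.root) : T.IsStrictAncestor T.root v :=
  ⟨Ne.symm h, T.depth v, T.iterate_depth_eq_root _ v rfl⟩

/-- Two ancestors of the same vertex are comparable: the one of smaller depth is an
ancestor of the other. -/
lemma isStrictAncestor_of_isStrictAncestor {a v u : V}
    (ha : T.IsStrictAncestor a u) (hv : T.IsStrictAncestor v u)
    (hd : T.depth a ≤ T.depth v) (hne : a ≠ v) : T.IsStrictAncestor a v := by
  obtain ⟨-, m, hm⟩ := ha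
  obtain ⟨-, n, hn⟩ := hv
  rcases le_or_gt n m with hmn | hmn
  · refine ⟨hne, m - n, ?_⟩
    rw [← hn, ← Function.iterate_add_apply, Nat.sub_add_cancel hmn, hm]
  · exfalso
    have hva : v = T.parent^[n - m] a := by
      rw [← hm, ← Function.iterate_add_apply, Nat.sub_add_cancel hmn.le, hn]
    by_cases har : a = T.root
    · have h0 : T.depth v = 0 := by
        have := T.depth_iterate_le (n - m) a
        rw [← hva, har, T.depth_root] at this
        omega
      exact hne (by rw [har, T.eq_root_of_depth_eq_zero h0])
    · have hp := T.depth_parent a har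
      have h1 : T.depth v ≤ T.depth (T.parent a) := by
        have h2 : n - m = (n - m - 1) + 1 := by omega
        rw [hva, h2, Function.iterate_succ_apply]
        exact T.depth_iterate_le _ _
      omega

end RTree

end Aux

section Main

open Classical

variable {V : Type} (G : SimpleGraph V) (T : RTree V)

lemma markedAncestors_append (L₁ L₂ : List V) (v : V) :
    markedAncestors T (L₁ ++ L₂) v = markedAncestors T L₁ v + markedAncestors T L₂ v := by
  simp [markedAncestors]

lemma markedAncestors_singleton (x v : V) :
    markedAncestors T [x] v = if T.IsStrictAncestor x v then 1 else 0 := by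
  by_cases h : T.IsStrictAncestor x v <;>
    simp [markedAncestors, List.countP_cons, h]

lemma bobDescCount_nil (v : V) : bobDescCount G T [] v = 0 := by
  simp [bobDescCount]

lemma bobDescCount_concat (M : List V) (x v : V) :
    bobDescCount G T (M ++ [x]) v = bobDescCount G T M v +
      if M.length % 2 = 1 ∧ G.Adj v x ∧ T.IsStrictAncestor v x then 1 else 0 := by
  unfold bobDescCount
  rw [List.zipIdx_append, List.map_append]
  have h1 : ([x].zipIdx (0 + M.length)).map Prod.swap = [(M.length, x)] := by simp
  rw [h1, List.filter_append, List.map_append, List.countP_append]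
  congr 1
  by_cases hpar : M.length % 2 = 1
  · by_cases hadj : G.Adj v x ∧ T.IsStrictAncestor v x
    · simp [hpar, hadj, List.countP_cons]
    · simp [hpar, hadj, List.countP_cons]
  · simp [hpar]

lemma followsStrategy_take {L : List V} (h : FollowsStrategy G T L) (n : ℕ) :
    FollowsStrategy G T (L.take n) := by
  obtain ⟨h1, h2, h3⟩ := h
  refine ⟨(List.take_sublist n L).nodup h1, ?_, ?_⟩
  · intro h'
    have hl : 0 < L.length := by
      simp only [List.length_take] at h'; omega
    have := h2 hl
    simp only [List.get_eq_getElem] at this ⊢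
    rw [List.getElem_take]
    exact this
  · intro i hi h'
    have h2i : 2 * i < n := by
      simp only [List.length_take] at h'; omega
    have hL2i : 2 * i < L.length := by
      simp only [List.length_take] at h'; omega
    have := h3 i hi hL2i
    have ht : (L.take n).take (2 * i) = L.take (2 * i) := by
      rw [List.take_take, min_eq_left h2i.le]
    rw [ht]
    simp only [List.get_eq_getElem] at this ⊢
    rw [List.getElem_take, List.getElem_take]
    exact this

lemma ancestorStrategy_key :
    ∀ (n : ℕ) (L : List V), L.length ≤ n → FollowsStrategy G T L →
      ∀ v, v ∉ L → bobDescCount G T L v + L.length % 2 ≤ markedAncestors T L v := by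
  intro n
  induction n with
  | zero =>
      intro L hL _ v _
      have hnil : L = [] := List.eq_nil_of_length_eq_zero (by omega)
      subst hnil
      simp [bobDescCount_nil, markedAncestors]
  | succ n ih =>
      intro L hLn hF v hv
      rcases L.eq_nil_or_concat with rfl | ⟨M, x, hMx⟩
      · simp [bobDescCount_nil, markedAncestors]
      rw [List.concat_eq_append] at hMx
      subst hMx
      have hvM : v ∉ M := fun h => hv (by simp [h])
      have hvx : v ≠ x := fun h => hv (by simp [h])
      have hlen1 : (M ++ [x]).length = M.length + 1 := by simp
      have hMlen : M.length ≤ n := by omega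
      have hFM : FollowsStrategy G T M := by
        have h := followsStrategy_take G T hF M.length
        rwa [List.take_left] at h
      have ihM := ih M hMlen hFM v hvM
      rw [bobDescCount_concat, markedAncestors_append, markedAncestors_singleton, hlen1]
      by_cases hpar : M.length % 2 = 1
      · -- Bob moved last
        have h2 : (M.length + 1) % 2 = 0 := by omega
        rw [h2]
        split
        · split <;> omega
        · split <;> omega
      · -- Alice moved last
        have hpar0 : M.length % 2 = 0 := by omega
        have hmod : (M.length + 1) % 2 = 1 := by omega
        rw [hmod]
        have hite0 : (if M.length % 2 = 1 ∧ G.Adj v x ∧ T.IsStrictAncestor v x then 1 else 0) = 0 := by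
          simp [hpar]
        rw [hite0]
        rcases M.eq_nil_or_concat with rfl | ⟨N, b, hNb⟩
        · -- L = [x], so x is the root
          have hx : x = T.root := by
            have h0 : 0 < (([] : List V) ++ [x]).length := by simp
            have := hF.2.1 h0
            simpa using this
          have hanc : T.IsStrictAncestor x v := by
            rw [hx]; exact T.root_isStrictAncestor (fun h => hvx (h.trans hx.symm))
          simp [bobDescCount_nil, markedAncestors, hanc]
        · rw [List.concat_eq_append] at hNb
          subst hNb
          have hNb1 : (N ++ [b]).length = N.length + 1 := by simp
          have hNlen : N.length % 2 = 1 := by omega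
          have hvN : v ∉ N := fun h => hvM (by simp [h])
          have hFN : FollowsStrategy G T N := by
            have h := followsStrategy_take G T hFM N.length
            rwa [List.take_left] at h
          have ihN := ih N (by omega) hFN v hvN
          rw [hNlen] at ihN
          -- extract Alice's move
          have hi1 : 1 ≤ (N ++ [b]).length / 2 := by omega
          have h2i : 2 * ((N ++ [b]).length / 2) = (N ++ [b]).length := by omega
          have hlt : 2 * ((N ++ [b]).length / 2) < ((N ++ [b]) ++ [x]).length := by omega
          have hA := hF.2.2 ((N ++ [b]).length / 2) hi1 hlt
          have htake : ((N ++ [b]) ++ [x]).take (2 * ((N ++ [b]).length / 2)) = N ++ [b] := by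
            rw [h2i]; exact List.take_left
          have hgx : ((N ++ [b]) ++ [x]).get ⟨2 * ((N ++ [b]).length / 2), hlt⟩ = x := by
            simp only [List.get_eq_getElem]
            exact List.getElem_concat_length (by omega) _
          have hgb : ((N ++ [b]) ++ [x]).get ⟨2 * ((N ++ [b]).length / 2) - 1, by omega⟩ = b := by
            simp only [List.get_eq_getElem]
            rw [List.getElem_append_left (by omega : 2 * ((N ++ [b]).length / 2) - 1 < (N ++ [b]).length)]
            exact List.getElem_concat_length (by omega) _
          rw [htake, hgx, hgb] at hA
          -- main case analysis
          have hbM : b ∈ N ++ [b] := by simp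
          rw [bobDescCount_concat, hNlen, markedAncestors_append, markedAncestors_singleton]
          by_cases hP : G.Adj v b ∧ T.IsStrictAncestor v b
          · have havail : Available G (N ++ [b]) v := ⟨hvM, b, hbM, hP.1.symm⟩
            rcases hA with ⟨hxb, -, hmin⟩ | ⟨hno, -, -⟩
            · have hdx : T.depth x ≤ T.depth v := hmin v hP.2 havail
              have hxv : T.IsStrictAncestor x v :=
                T.isStrictAncestor_of_isStrictAncestor hxb hP.2 hdx (fun e => hvx e.symm)
              simp only [hP, and_self, if_true, hxv]
              omega
            · exact absurd havail (hno v hP.2)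
          · have h0 : (if (1:ℕ) = 1 ∧ G.Adj v b ∧ T.IsStrictAncestor v b then 1 else 0) = 0 := by
              simp [hP]
            rw [h0]
            split <;> omega

end Main

/-- Let `G` be a connected graph of treedepth `k ≥ 3`, witnessed by a
rooted tree `T` of height `k` whose closure contains `G`.  If Alice follows the
ancestor-marking strategy in the marking game on `G` (connected or not), then at every
point of the game and for every unmarked vertex `v`, the number of descendant-neighbours
of `v` marked by Bob is at most the number of marked ancestors of `v`. -/
theorem ancestorStrategy_invariant
    {V : Type} (G : SimpleGraph V) (T : RTree V) (k : ℕ) (hk : 3 ≤ k)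
    (hheight : T.HeightLE k) (hconn : G.Connected) (hG : G ≤ T.closure)
    (L : List V) (hL : FollowsStrategy G T L) :
    ∀ v : V, v ∉ L → bobDescCount G T L v ≤ markedAncestors T L v := by
  intro v hv
  have h := ancestorStrategy_key G T L.length L le_rfl hL v hv
  omega
end
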